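/- With the setup of nested FE spaces and prolongations P_k as above, define ū^L := 0 and ūᵏ := P_kᵀ(ū^{k+1} + (A^{k+1})ᵀ u^{k+1}), where (Aᵏ)_{ij} = a(φᵢᵏ, φⱼᵏ). Then for each k and each index j on level k, (Q_k A u^{>k})_j = ūᵏ_j, i.e., ūᵏ encodes the action of the stiffness operator applied to all finer-level contributions, tested against level-k basis functions. -/

import Mathlib

open Matrix BigOperators

/-- Fine-grid accumulation (Lemma "Fine grid smoothing"): with the refinement relation
`φᵢᵏ = ∑ⱼ (P_kᵀ)_{i,j} φⱼ^{k+1}`, stiffness matrices `(Aᵏ)_{ij} = a(φᵢᵏ, φⱼᵏ)` and the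
downward recursion `ū^L = 0`, `ūᵏ = P_kᵀ(ū^{k+1} + (A^{k+1})ᵀ u^{k+1})`, the vector `ūᵏ`
encodes the stiffness action of all finer-level contributions tested against level-`k`
basis functions: `(Q_k A u^{>k})_j = ūᵏ_j`. -/
theorem fine_grid_accumulation {D : Type*} (L : ℕ) (n : ℕ → ℕ)
    (a : (D → ℝ) →ₗ[ℝ] (D → ℝ) →ₗ[ℝ] ℝ)
    (φ : (k : ℕ) → Fin (n k) → D → ℝ)
    (P : (k : ℕ) → Matrix (Fin (n (k + 1))) (Fin (n k)) ℝ)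
    (hP : ∀ k i, φ k i = fun x => ∑ j, P k j i * φ (k + 1) j x)
    (u : (k : ℕ) → Fin (n k) → ℝ)
    (ub : (k : ℕ) → Fin (n k) → ℝ)
    (hubL : ub L = 0)
    (hubs : ∀ k, k < L → ub k = (P k)ᵀ.mulVec (ub (k + 1) +
        (Matrix.of fun i j => a (φ (k + 1) i) (φ (k + 1) j))ᵀ.mulVec (u (k + 1)))) :
    ∀ k ≤ L, ∀ j : Fin (n k),
      (∑ ℓ ∈ Finset.Icc (k + 1) L, ∑ i, u ℓ i * a (φ ℓ i) (φ k j)) = ub k j := by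
  suffices H : ∀ d k, k + d = L → ∀ j : Fin (n k),
      (∑ ℓ ∈ Finset.Icc (k + 1) L, ∑ i, u ℓ i * a (φ ℓ i) (φ k j)) = ub k j by
    intro k hk j
    exact H (L - k) k (by omega) j
  intro d
  induction d with
  | zero =>
    intro k hk j
    have hkL : k = L := by omega
    subst hkL
    rw [Finset.Icc_eq_empty (by omega), hubL]
    simp
  | succ d ih =>
    intro k hk j
    have hkL : k < L := by omega
    have hφ : ∀ (v : D → ℝ), a v (φ k j) = ∑ m, P k m j * a v (φ (k + 1) m) := by
      intro v
      have hφ' : φ k j = ∑ m, P k m j • φ (k + 1) m := by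
        funext x
        rw [hP]
        simp
      rw [hφ', map_sum]
      simp [smul_eq_mul]
    have hins : Finset.Icc (k + 1) L = insert (k + 1) (Finset.Icc (k + 2) L) := by
      rw [← Finset.Ioc_insert_left hkL, ← Finset.Icc_add_one_left_eq_Ioc]
      rfl
    rw [hubs k hkL, hins, Finset.sum_insert (by simp)]
    simp only [hφ, Matrix.mulVec, dotProduct, Matrix.transpose_apply, Pi.add_apply,
      Matrix.of_apply, ← ih (k + 1) (by omega)]
    have e1 : (∑ x : Fin (n (k+1)), u (k+1) x * ∑ m : Fin (n (k+1)), P k m j * a (φ (k+1) x) (φ (k+1) m))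
        = ∑ m : Fin (n (k+1)), P k m j * ∑ i : Fin (n (k+1)), a (φ (k+1) i) (φ (k+1) m) * u (k+1) i := by
      simp only [Finset.mul_sum]
      rw [Finset.sum_comm]
      refine Finset.sum_congr rfl fun m _ => Finset.sum_congr rfl fun i _ => by ring
    have e2 : (∑ ℓ ∈ Finset.Icc (k + 2) L, ∑ i : Fin (n ℓ), u ℓ i * ∑ m : Fin (n (k+1)), P k m j * a (φ ℓ i) (φ (k+1) m))
        = ∑ m : Fin (n (k+1)), P k m j * ∑ ℓ ∈ Finset.Icc (k + 1 + 1) L, ∑ i : Fin (n ℓ), u ℓ i * a (φ ℓ i) (φ (k+1) m) := by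
      simp only [Finset.mul_sum]
      have h2 : ∀ ℓ ∈ Finset.Icc (k + 2) L,
          (∑ i : Fin (n ℓ), ∑ m : Fin (n (k+1)), u ℓ i * (P k m j * a (φ ℓ i) (φ (k+1) m)))
          = ∑ m : Fin (n (k+1)), ∑ i : Fin (n ℓ), u ℓ i * (P k m j * a (φ ℓ i) (φ (k+1) m)) :=
        fun ℓ _ => Finset.sum_comm
      rw [Finset.sum_congr rfl h2, Finset.sum_comm]
      refine Finset.sum_congr rfl fun m _ => Finset.sum_congr rfl fun ℓ _ =>
        Finset.sum_congr rfl fun i _ => by ring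
    rw [e1, e2, ← Finset.sum_add_distrib]
    exact Finset.sum_congr rfl fun m _ => by ring
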